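/- Under the same hypotheses, if in addition W is (H−ε)-Hölder continuous on [0,T] with Hölder seminorm ‖W‖_{H−ε,T}, then X is (H−ε)-Hölder continuous with ‖X‖_{H−ε,T} ≤ 2|α| ‖X‖_{∞,T} T^{1+ε−H} + 2σ ‖W‖_{H−ε,T}. -/

import Mathlib

open Set

set_option maxHeartbeats 1000000

/-- Hölder continuity of the reflected path: `‖X‖_{H-ε,T} ≤ 2|α|‖X‖_{∞,T}T^{1+ε-H} + 2σ‖W‖_{H-ε,T}`,
stated pointwise with `CX` an a.e. sup bound for `X` and `CW` a Hölder constant for `W`. -/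
theorem stmt2 (T x α σ H ε : ℝ) (hT : 0 < T) (hx : 0 ≤ x) (hσ : 0 < σ)
    (hε : 0 < ε) (hεH : ε < H) (hH : H < 1)
    (W X : ℝ → ℝ) (hWc : ContinuousOn W (Icc 0 T)) (hW0 : W 0 = 0)
    (hXc : ContinuousOn X (Icc 0 T))
    (CW : ℝ) (hWHolder : ∀ s t : ℝ, 0 ≤ s → s ≤ t → t ≤ T → |W t - W s| ≤ CW * (t - s) ^ (H - ε))
    (CX : ℝ) (hXsup : ∀ t ∈ Icc 0 T, |X t| ≤ CX)
    (hEq : ∀ t ∈ Icc 0 T,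
      X t = x - α * (∫ s in (0:ℝ)..t, X s) + σ * W t +
        max 0 (sSup ((fun s => -x + α * (∫ u in (0:ℝ)..s, X u) - σ * W s) '' Icc 0 t))) :
    ∀ θ r : ℝ, 0 ≤ θ → θ < r → r ≤ T →
      |X r - X θ| ≤ (2 * |α| * CX * T ^ (1 + ε - H) + 2 * σ * CW) * (r - θ) ^ (H - ε) := by
  intro θ r hθ0 hθr hrT
  set Y : ℝ → ℝ := fun s => -x + α * (∫ u in (0:ℝ)..s, X u) - σ * W s with hY
  have hrθ : (0:ℝ) < r - θ := by linarith
  have hθT : θ ≤ T := by linarith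
  have hr0 : (0:ℝ) ≤ r := by linarith
  have hCX0 : 0 ≤ CX := le_trans (abs_nonneg _) (hXsup 0 ⟨le_refl 0, hT.le⟩)
  have hTpow : (0:ℝ) < T ^ (H - ε) := Real.rpow_pos_of_pos hT _
  have hCW0 : 0 ≤ CW := by
    have h := hWHolder 0 T (le_refl 0) hT.le (le_refl T)
    rw [hW0, sub_zero, sub_zero] at h
    nlinarith [abs_nonneg (W T)]
  -- integrability of X on subintervals
  have hint : ∀ a b : ℝ, 0 ≤ a → a ≤ b → b ≤ T → IntervalIntegrable X MeasureTheory.volume a b := by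
    intro a b ha hab hbT
    apply ContinuousOn.intervalIntegrable
    apply hXc.mono
    rw [uIcc_of_le hab]
    exact Icc_subset_Icc ha hbT
  -- integral bound
  have hintbd : ∀ a b : ℝ, 0 ≤ a → a ≤ b → b ≤ T →
      |∫ u in a..b, X u| ≤ CX * (b - a) := by
    intro a b ha hab hbT
    have := intervalIntegral.norm_integral_le_of_norm_le_const (C := CX)
      (f := X) (a := a) (b := b) ?_
    · rw [Real.norm_eq_abs] at this
      calc |∫ u in a..b, X u| ≤ CX * |b - a| := this
        _ = CX * (b - a) := by rw [abs_of_nonneg (by linarith)]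
    · intro y hy
      rw [uIoc_of_le hab] at hy
      exact hXsup y ⟨by linarith [hy.1], le_trans hy.2 hbT⟩
  -- primitive difference
  have hprim : ∀ a b : ℝ, 0 ≤ a → a ≤ b → b ≤ T →
      (∫ u in (0:ℝ)..b, X u) - (∫ u in (0:ℝ)..a, X u) = ∫ u in a..b, X u := by
    intro a b ha hab hbT
    have := intervalIntegral.integral_add_adjacent_intervals
      (hint 0 a (le_refl 0) ha (le_trans hab hbT)) (hint a b ha hab hbT)
    linarith [this]
  -- bound on Y increments over [θ, r]
  set D : ℝ := |α| * CX * (r - θ) + σ * CW * (r - θ) ^ (H - ε) with hD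
  have hD0 : 0 ≤ D := by
    have h1 : 0 ≤ |α| * CX * (r - θ) :=
      mul_nonneg (mul_nonneg (abs_nonneg α) hCX0) hrθ.le
    have h2 : 0 ≤ σ * CW * (r - θ) ^ (H - ε) :=
      mul_nonneg (mul_nonneg hσ.le hCW0) (Real.rpow_nonneg hrθ.le _)
    rw [hD]; linarith
  have hYinc : ∀ s ∈ Icc θ r, Y s - Y θ ≤ D := by
    intro s hs
    have hs0 : 0 ≤ s := le_trans hθ0 hs.1
    have hsT : s ≤ T := le_trans hs.2 hrT
    have hYd : Y s - Y θ = α * (∫ u in θ..s, X u) - σ * (W s - W θ) := by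
      simp only [hY]
      rw [← hprim θ s hθ0 hs.1 hsT]
      ring
    rw [hYd]
    have h1 : |α * (∫ u in θ..s, X u)| ≤ |α| * CX * (r - θ) := by
      rw [abs_mul]
      calc |α| * |∫ u in θ..s, X u| ≤ |α| * (CX * (s - θ)) :=
            mul_le_mul_of_nonneg_left (hintbd θ s hθ0 hs.1 hsT) (abs_nonneg α)
        _ ≤ |α| * (CX * (r - θ)) :=
            mul_le_mul_of_nonneg_left
              (mul_le_mul_of_nonneg_left (by linarith [hs.2]) hCX0) (abs_nonneg α)
        _ = |α| * CX * (r - θ) := by ring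
    have h2 : |σ * (W s - W θ)| ≤ σ * CW * (r - θ) ^ (H - ε) := by
      rw [abs_mul, abs_of_pos hσ]
      have hw := hWHolder θ s hθ0 hs.1 hsT
      have hmono : (s - θ) ^ (H - ε) ≤ (r - θ) ^ (H - ε) :=
        Real.rpow_le_rpow (by linarith [hs.1]) (by linarith [hs.2]) (by linarith)
      calc σ * |W s - W θ| ≤ σ * (CW * (s - θ) ^ (H - ε)) :=
            mul_le_mul_of_nonneg_left hw hσ.le
        _ ≤ σ * (CW * (r - θ) ^ (H - ε)) :=
            mul_le_mul_of_nonneg_left (mul_le_mul_of_nonneg_left hmono hCW0) hσ.le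
        _ = σ * CW * (r - θ) ^ (H - ε) := by ring
    calc α * (∫ u in θ..s, X u) - σ * (W s - W θ)
        ≤ |α * (∫ u in θ..s, X u)| + |σ * (W s - W θ)| := by
          have := neg_abs_le (σ * (W s - W θ))
          have := le_abs_self (α * (∫ u in θ..s, X u))
          linarith
      _ ≤ D := by rw [hD]; linarith
  -- bounded above
  have hbdd : ∀ t : ℝ, t ≤ T → BddAbove (Y '' Icc 0 t) := by
    intro t htT
    refine ⟨|α| * CX * T + σ * CW * T ^ (H - ε), ?_⟩
    rintro _ ⟨s, hs, rfl⟩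
    have hs0 : 0 ≤ s := hs.1
    have hsT : s ≤ T := le_trans hs.2 htT
    have h1 : |∫ u in (0:ℝ)..s, X u| ≤ CX * s := by
      have := hintbd 0 s (le_refl 0) hs0 hsT
      simpa using this
    have h2 : |W s| ≤ CW * s ^ (H - ε) := by
      have := hWHolder 0 s (le_refl 0) hs0 hsT
      simpa [hW0] using this
    have h3 : CX * s ≤ CX * T := by nlinarith
    have h4 : s ^ (H - ε) ≤ T ^ (H - ε) := Real.rpow_le_rpow hs0 hsT (by linarith)
    have h5 : CW * s ^ (H - ε) ≤ CW * T ^ (H - ε) := by nlinarith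
    have hα : α * (∫ u in (0:ℝ)..s, X u) ≤ |α| * (CX * s) := by
      calc α * (∫ u in (0:ℝ)..s, X u) ≤ |α * (∫ u in (0:ℝ)..s, X u)| := le_abs_self _
        _ = |α| * |∫ u in (0:ℝ)..s, X u| := abs_mul _ _
        _ ≤ |α| * (CX * s) := mul_le_mul_of_nonneg_left h1 (abs_nonneg α)
    have hw : -(σ * W s) ≤ σ * (CW * s ^ (H - ε)) := by
      have := neg_abs_le (W s)
      nlinarith [hσ.le]
    simp only [hY]
    have : |α| * (CX * s) ≤ |α| * (CX * T) := by nlinarith [abs_nonneg α]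
    nlinarith [hσ.le, abs_nonneg α]
  -- sSup split
  set Sθ : ℝ := sSup (Y '' Icc 0 θ) with hSθ
  set Sr : ℝ := sSup (Y '' Icc 0 r) with hSr
  set M : ℝ := sSup (Y '' Icc θ r) with hM
  have hbddM : BddAbove (Y '' Icc θ r) :=
    (hbdd r hrT).mono (image_mono (f := Y) (Icc_subset_Icc hθ0 (le_refl r)))
  have hsplit : Sr = max Sθ M := by
    have hu : Icc (0:ℝ) r = Icc 0 θ ∪ Icc θ r := (Icc_union_Icc_eq_Icc hθ0 hθr.le).symm
    rw [hSr, hSθ, hM, hu, image_union]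
    exact csSup_union (hbdd θ hθT) ⟨Y 0, mem_image_of_mem Y ⟨le_refl 0, hθ0⟩⟩
      hbddM ⟨Y θ, mem_image_of_mem Y ⟨le_refl θ, hθr.le⟩⟩
  have hYθSθ : Y θ ≤ Sθ :=
    le_csSup (hbdd θ hθT) (mem_image_of_mem Y ⟨hθ0, le_refl θ⟩)
  have hMbd : M ≤ Y θ + D := by
    have hne : (Y '' Icc θ r).Nonempty := ⟨Y θ, mem_image_of_mem Y ⟨le_refl θ, hθr.le⟩⟩
    rw [hM]
    refine csSup_le hne ?_
    rintro _ ⟨s, hs, rfl⟩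
    linarith [hYinc s hs]
  -- the reflection term
  set Lθ : ℝ := max 0 Sθ with hLθ
  set Lr : ℝ := max 0 Sr with hLr
  have hLmono : Lθ ≤ Lr := by
    apply max_le_max (le_refl 0)
    rw [hsplit]; exact le_max_left _ _
  have hLbd : Lr - Lθ ≤ D := by
    rw [hLr, hsplit]
    rcases le_total M Sθ with h | h
    · rw [max_eq_left h]; rw [hLθ]; simp [hD0]
    · rw [max_eq_right h]
      rcases le_total M 0 with h0 | h0
      · rw [max_eq_left h0]
        have : 0 ≤ Lθ := le_max_left _ _
        linarith
      · rw [max_eq_right h0]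
        have : Y θ ≤ Lθ := le_trans hYθSθ (le_max_right _ _)
        linarith
  -- decomposition of X r - X θ
  have hXr := hEq r ⟨hr0, hrT⟩
  have hXθ := hEq θ ⟨hθ0, hθT⟩
  have hdec : X r - X θ = -α * (∫ u in θ..r, X u) + σ * (W r - W θ) + (Lr - Lθ) := by
    rw [hXr, hXθ, ← hprim θ r hθ0 hθr.le hrT]
    simp only [hLr, hLθ, hSr, hSθ, hY]
    ring
  have h1 : |(-α) * (∫ u in θ..r, X u)| ≤ |α| * CX * (r - θ) := by
    rw [abs_mul, abs_neg]
    calc |α| * |∫ u in θ..r, X u| ≤ |α| * (CX * (r - θ)) :=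
          mul_le_mul_of_nonneg_left (hintbd θ r hθ0 hθr.le hrT) (abs_nonneg α)
      _ = |α| * CX * (r - θ) := by ring
  have h2 : |σ * (W r - W θ)| ≤ σ * CW * (r - θ) ^ (H - ε) := by
    rw [abs_mul, abs_of_pos hσ]
    have hw := hWHolder θ r hθ0 hθr.le hrT
    calc σ * |W r - W θ| ≤ σ * (CW * (r - θ) ^ (H - ε)) := mul_le_mul_of_nonneg_left hw hσ.le
      _ = σ * CW * (r - θ) ^ (H - ε) := by ring
  have hfinal : |X r - X θ| ≤ 2 * D := by
    rw [hdec]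
    calc |(-α) * (∫ u in θ..r, X u) + σ * (W r - W θ) + (Lr - Lθ)|
        ≤ |(-α) * (∫ u in θ..r, X u)| + |σ * (W r - W θ)| + |Lr - Lθ| := by
          exact (abs_add_le _ _).trans (by linarith [abs_add_le ((-α) * (∫ u in θ..r, X u)) (σ * (W r - W θ))])
      _ ≤ |α| * CX * (r - θ) + σ * CW * (r - θ) ^ (H - ε) + (Lr - Lθ) := by
          rw [abs_of_nonneg (by linarith : (0:ℝ) ≤ Lr - Lθ)]
          linarith
      _ ≤ 2 * D := by rw [hD]; linarith
  -- convert (r - θ) to T^{1+ε-H} * (r-θ)^{H-ε}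
  have hconv : (r - θ) ≤ T ^ (1 + ε - H) * (r - θ) ^ (H - ε) := by
    calc (r - θ) = (r - θ) ^ (1 + ε - H) * (r - θ) ^ (H - ε) := by
          rw [← Real.rpow_add hrθ]; norm_num
      _ ≤ T ^ (1 + ε - H) * (r - θ) ^ (H - ε) :=
          mul_le_mul_of_nonneg_right
            (Real.rpow_le_rpow hrθ.le (by linarith) (by linarith))
            (Real.rpow_nonneg hrθ.le _)
  calc |X r - X θ| ≤ 2 * D := hfinal
    _ = 2 * |α| * CX * (r - θ) + 2 * σ * CW * (r - θ) ^ (H - ε) := by rw [hD]; ring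
    _ ≤ 2 * |α| * CX * (T ^ (1 + ε - H) * (r - θ) ^ (H - ε)) + 2 * σ * CW * (r - θ) ^ (H - ε) := by
        have h := mul_le_mul_of_nonneg_left hconv
          (mul_nonneg (mul_nonneg (by norm_num : (0:ℝ) ≤ 2) (abs_nonneg α)) hCX0)
        linarith
    _ = (2 * |α| * CX * T ^ (1 + ε - H) + 2 * σ * CW) * (r - θ) ^ (H - ε) := by ring
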